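/- The top-down random walk on a ZDD samples from the Gibbs distribution: with B_v as in the bottom-up recursion (B_⊤ = 1, B_⊥ = 0, B_v = B_{c⁰_v} + exp(−c_{l_v}) B_{c¹_v}), a random walk from the root choosing the 0-arc at node v with probability B_{c⁰_v}/B_v and the 1-arc with probability exp(−c_{l_v})B_{c¹_v}/B_v never reaches ⊥, and its trajectory R satisfies P(trajectory = R) = exp(−c·1_{X(R)}) / Σ_{S∈𝒮} exp(−c·1_S) for each root-to-⊤ path R. -/

import Mathlib

open Finset

/-- A ZDD over resources `[n]`: nodes `Fin m` with two terminals (`Sum.inr true` = ⊤,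
`Sum.inr false` = ⊥), each non-terminal node has a label and 0- and 1-children, indices
strictly decrease along arcs (DAG) and labels strictly increase along arcs (ordered,
so paths correspond bijectively to the represented sets). -/
structure ZDD (n : ℕ) where
  m : ℕ
  lbl : Fin m → Fin n
  c0 : Fin m → Fin m ⊕ Bool
  c1 : Fin m → Fin m ⊕ Bool
  root : Fin m
  desc0 : ∀ v w, c0 v = Sum.inl w → (w : ℕ) < v
  desc1 : ∀ v w, c1 v = Sum.inl w → (w : ℕ) < v
  ord0 : ∀ v w, c0 v = Sum.inl w → lbl v < lbl w
  ord1 : ∀ v w, c1 v = Sum.inl w → lbl v < lbl w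

theorem zdd_random_walk_gibbs {n : ℕ} (Z : ZDD n) (c : Fin n → ℝ)
    (F : Fin Z.m ⊕ Bool → Finset (Finset (Fin n)))
    (hFtop : F (Sum.inr true) = {∅}) (hFbot : F (Sum.inr false) = ∅)
    (hF : ∀ v : Fin Z.m,
      F (Sum.inl v) = F (Z.c0 v) ∪ (F (Z.c1 v)).image (insert (Z.lbl v)))
    (B : Fin Z.m ⊕ Bool → ℝ)
    (hBtop : B (Sum.inr true) = 1) (hBbot : B (Sum.inr false) = 0)
    (hB : ∀ v : Fin Z.m,
      B (Sum.inl v) = B (Z.c0 v) + Real.exp (-(c (Z.lbl v))) * B (Z.c1 v))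
    (hBroot : 0 < B (Sum.inl Z.root))
    -- P x S : probability that the top-down random walk from node `x` recovers the set `S`
    (P : Fin Z.m ⊕ Bool → Finset (Fin n) → ℝ)
    (hPtop : ∀ S, P (Sum.inr true) S = if S = ∅ then 1 else 0)
    (hPbot : ∀ S, P (Sum.inr false) S = 0)
    (hP : ∀ (v : Fin Z.m) (S : Finset (Fin n)),
      P (Sum.inl v) S =
        (B (Z.c0 v) / B (Sum.inl v)) * P (Z.c0 v) S +
          (Real.exp (-(c (Z.lbl v))) * B (Z.c1 v) / B (Sum.inl v)) *
            (if Z.lbl v ∈ S then P (Z.c1 v) (S.erase (Z.lbl v)) else 0)) :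
    (∀ S ∈ F (Sum.inl Z.root),
        P (Sum.inl Z.root) S =
          Real.exp (-(∑ i ∈ S, c i)) / B (Sum.inl Z.root)) ∧
      ∑ S ∈ F (Sum.inl Z.root), P (Sum.inl Z.root) S = 1 := by
  classical
  set wt : Finset (Fin n) → ℝ := fun S => Real.exp (-(∑ i ∈ S, c i)) with hwt
  -- rank for strong induction
  set rnk : Fin Z.m ⊕ Bool → ℕ := Sum.elim (fun v => (v : ℕ) + 1) (fun _ => 0) with hrnk
  have hrk : ∀ (v : Fin Z.m) (k : ℕ), rnk (Sum.inl v) < k →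
      rnk (Z.c0 v) < k ∧ rnk (Z.c1 v) < k := by
    intro v k hk
    simp only [hrnk, Sum.elim_inl] at hk
    constructor
    · cases hc : Z.c0 v with
      | inl w => have := Z.desc0 v w hc; simp [hrnk]; omega
      | inr b => simp [hrnk]; omega
    · cases hc : Z.c1 v with
      | inl w => have := Z.desc1 v w hc; simp [hrnk]; omega
      | inr b => simp [hrnk]; omega
  -- Lemma A : all elements of sets in F (inl v) are ≥ lbl v
  have hA : ∀ k x, rnk x < k → ∀ v : Fin Z.m, x = Sum.inl v →
      ∀ S ∈ F x, ∀ i ∈ S, Z.lbl v ≤ i := by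
    intro k
    induction k with
    | zero => intro x hx; omega
    | succ k ih =>
      rintro x hx v rfl S hS i hiS
      obtain ⟨h0, h1⟩ := hrk v _ hx
      have h0' : rnk (Z.c0 v) < k := by
        simp only [hrnk, Sum.elim_inl] at hx
        cases hc : Z.c0 v with
        | inl w => have := Z.desc0 v w hc; simp [hrnk]; omega
        | inr b => simp [hrnk]; omega
      have h1' : rnk (Z.c1 v) < k := by
        simp only [hrnk, Sum.elim_inl] at hx
        cases hc : Z.c1 v with
        | inl w => have := Z.desc1 v w hc; simp [hrnk]; omega
        | inr b => simp [hrnk]; omega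
      rw [hF] at hS
      rcases Finset.mem_union.1 hS with h | h
      · cases hc : Z.c0 v with
        | inl w =>
          rw [hc] at h
          have := ih _ (hc ▸ h0') w rfl S h i hiS
          exact le_of_lt (lt_of_lt_of_le (Z.ord0 v w hc) this)
        | inr b =>
          rw [hc] at h
          cases b
          · rw [hFbot] at h; exact absurd h (Finset.notMem_empty S)
          · rw [hFtop] at h
            rw [Finset.mem_singleton] at h
            subst h; exact absurd hiS (Finset.notMem_empty i)
      · rcases Finset.mem_image.1 h with ⟨T, hT, rfl⟩
        rcases Finset.mem_insert.1 hiS with rfl | hiT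
        · exact le_refl _
        · cases hc : Z.c1 v with
          | inl w =>
            rw [hc] at hT
            have := ih _ (hc ▸ h1') w rfl T hT i hiT
            exact le_of_lt (lt_of_lt_of_le (Z.ord1 v w hc) this)
          | inr b =>
            rw [hc] at hT
            cases b
            · rw [hFbot] at hT; exact absurd hT (Finset.notMem_empty T)
            · rw [hFtop] at hT
              rw [Finset.mem_singleton] at hT
              subst hT; exact absurd hiT (Finset.notMem_empty i)
  have hA' : ∀ v : Fin Z.m, ∀ S ∈ F (Sum.inl v), ∀ i ∈ S, Z.lbl v ≤ i :=
    fun v => hA (rnk (Sum.inl v) + 1) _ (Nat.lt_succ_self _) v rfl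
  -- the label of v is not in any set of a child family
  have hchild : ∀ v : Fin Z.m, ∀ x, (x = Z.c0 v ∨ x = Z.c1 v) →
      ∀ S ∈ F x, Z.lbl v ∉ S := by
    intro v x hx S hS hmem
    cases hxc : x with
    | inl w =>
      subst hxc
      have hlt : Z.lbl v < Z.lbl w := by
        rcases hx with h | h
        · exact Z.ord0 v w h.symm
        · exact Z.ord1 v w h.symm
      have := hA' w S hS _ hmem
      exact absurd (lt_of_lt_of_le hlt this) (lt_irrefl _)
    | inr b =>
      subst hxc
      cases b
      · rw [hFbot] at hS; exact absurd hS (Finset.notMem_empty S)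
      · rw [hFtop] at hS
        rw [Finset.mem_singleton] at hS
        subst hS; exact absurd hmem (Finset.notMem_empty _)
  -- disjointness of the union in hF
  have hdisj : ∀ v : Fin Z.m,
      Disjoint (F (Z.c0 v)) ((F (Z.c1 v)).image (insert (Z.lbl v))) := by
    intro v
    rw [Finset.disjoint_left]
    intro S hS hS'
    rcases Finset.mem_image.1 hS' with ⟨T, hT, rfl⟩
    exact hchild v _ (Or.inl rfl) _ hS (Finset.mem_insert_self _ _)
  -- injectivity of insert on F (c1 v)
  have hinj : ∀ v : Fin Z.m, ∀ T ∈ F (Z.c1 v), ∀ T' ∈ F (Z.c1 v),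
      insert (Z.lbl v) T = insert (Z.lbl v) T' → T = T' := by
    intro v T hT T' hT' hEq
    have h1 : Z.lbl v ∉ T := hchild v _ (Or.inr rfl) T hT
    have h2 : Z.lbl v ∉ T' := hchild v _ (Or.inr rfl) T' hT'
    have := congrArg (Finset.erase · (Z.lbl v)) hEq
    simpa [Finset.erase_insert h1, Finset.erase_insert h2] using this
  -- weight of inserted sets
  have hwtins : ∀ (v : Fin Z.m) (T : Finset (Fin n)), Z.lbl v ∉ T →
      wt (insert (Z.lbl v) T) = Real.exp (-(c (Z.lbl v))) * wt T := by
    intro v T hT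
    simp only [hwt]
    rw [Finset.sum_insert hT, neg_add, Real.exp_add]
  -- terminal cases for B
  have hBterm : ∀ b, B (Sum.inr b) = ∑ S ∈ F (Sum.inr b), wt S := by
    intro b
    cases b
    · rw [hFbot, hBbot, Finset.sum_empty]
    · rw [hFtop, hBtop, Finset.sum_singleton]
      simp [hwt]
  -- Lemma B : B x = ∑ wt
  have hBF : ∀ k x, rnk x < k → B x = ∑ S ∈ F x, wt S := by
    intro k
    induction k with
    | zero => intro x hx; omega
    | succ k ih =>
      intro x hx
      cases x with
      | inr b => exact hBterm b
      | inl v =>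
        obtain ⟨h0, h1⟩ := hrk v _ hx
        have h0' : rnk (Z.c0 v) < k := by
          simp only [hrnk, Sum.elim_inl] at hx
          cases hc : Z.c0 v with
          | inl w => have := Z.desc0 v w hc; simp [hrnk]; omega
          | inr b => simp [hrnk]; omega
        have h1' : rnk (Z.c1 v) < k := by
          simp only [hrnk, Sum.elim_inl] at hx
          cases hc : Z.c1 v with
          | inl w => have := Z.desc1 v w hc; simp [hrnk]; omega
          | inr b => simp [hrnk]; omega
        rw [hB, hF, Finset.sum_union (hdisj v), Finset.sum_image (hinj v),
          ih _ h0', ih _ h1', Finset.mul_sum]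
        congr 1
        apply Finset.sum_congr rfl
        intro T hT
        exact (hwtins v T (hchild v _ (Or.inr rfl) T hT)).symm
  have hBF' : ∀ x, B x = ∑ S ∈ F x, wt S :=
    fun x => hBF (rnk x + 1) x (Nat.lt_succ_self _)
  -- positivity
  have hBpos : ∀ x, (F x).Nonempty → 0 < B x := by
    intro x hx
    rw [hBF' x]
    exact Finset.sum_pos (fun S _ => Real.exp_pos _) hx
  -- Lemma D : P x S = 0 off the family
  have hD : ∀ k x, rnk x < k → ∀ S, S ∉ F x → P x S = 0 := by
    intro k
    induction k with
    | zero => intro x hx; omega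
    | succ k ih =>
      intro x hx S hS
      cases x with
      | inr b =>
        cases b
        · exact hPbot S
        · rw [hPtop]
          rw [hFtop, Finset.mem_singleton] at hS
          simp [hS]
      | inl v =>
        have h0' : rnk (Z.c0 v) < k := by
          simp only [hrnk, Sum.elim_inl] at hx
          cases hc : Z.c0 v with
          | inl w => have := Z.desc0 v w hc; simp [hrnk]; omega
          | inr b => simp [hrnk]; omega
        have h1' : rnk (Z.c1 v) < k := by
          simp only [hrnk, Sum.elim_inl] at hx
          cases hc : Z.c1 v with
          | inl w => have := Z.desc1 v w hc; simp [hrnk]; omega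
          | inr b => simp [hrnk]; omega
        rw [hF] at hS
        have hS0 : S ∉ F (Z.c0 v) := fun h => hS (Finset.mem_union_left _ h)
        have hS1 : S ∉ (F (Z.c1 v)).image (insert (Z.lbl v)) :=
          fun h => hS (Finset.mem_union_right _ h)
        rw [hP, ih _ h0' S hS0, mul_zero, zero_add]
        by_cases hmem : Z.lbl v ∈ S
        · have herase : S.erase (Z.lbl v) ∉ F (Z.c1 v) := by
            intro h
            exact hS1 (Finset.mem_image.2 ⟨_, h, Finset.insert_erase hmem⟩)
          rw [if_pos hmem, ih _ h1' _ herase, mul_zero]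
        · rw [if_neg hmem, mul_zero]
  have hD' : ∀ x S, S ∉ F x → P x S = 0 :=
    fun x => hD (rnk x + 1) x (Nat.lt_succ_self _)
  -- Lemma C : Gibbs formula
  have hC : ∀ k x, rnk x < k → ∀ S ∈ F x, P x S = wt S / B x := by
    intro k
    induction k with
    | zero => intro x hx; omega
    | succ k ih =>
      intro x hx S hS
      cases x with
      | inr b =>
        cases b
        · rw [hFbot] at hS; exact absurd hS (Finset.notMem_empty S)
        · rw [hFtop, Finset.mem_singleton] at hS
          subst hS
          rw [hPtop, hBtop, if_pos rfl]
          simp [hwt]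
      | inl v =>
        have h0' : rnk (Z.c0 v) < k := by
          simp only [hrnk, Sum.elim_inl] at hx
          cases hc : Z.c0 v with
          | inl w => have := Z.desc0 v w hc; simp [hrnk]; omega
          | inr b => simp [hrnk]; omega
        have h1' : rnk (Z.c1 v) < k := by
          simp only [hrnk, Sum.elim_inl] at hx
          cases hc : Z.c1 v with
          | inl w => have := Z.desc1 v w hc; simp [hrnk]; omega
          | inr b => simp [hrnk]; omega
        have hBv : 0 < B (Sum.inl v) := hBpos _ ⟨S, hS⟩
        rw [hF] at hS
        rcases Finset.mem_union.1 hS with h | h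
        · have hB0 : 0 < B (Z.c0 v) := hBpos _ ⟨S, h⟩
          have hmem : Z.lbl v ∉ S := hchild v _ (Or.inl rfl) S h
          rw [hP, if_neg hmem, mul_zero, add_zero, ih _ h0' S h]
          field_simp
        · rcases Finset.mem_image.1 h with ⟨T, hT, rfl⟩
          have hTv : Z.lbl v ∉ T := hchild v _ (Or.inr rfl) T hT
          have hB1 : 0 < B (Z.c1 v) := hBpos _ ⟨T, hT⟩
          have hmem : Z.lbl v ∈ insert (Z.lbl v) T := Finset.mem_insert_self _ _
          have hnot0 : insert (Z.lbl v) T ∉ F (Z.c0 v) := by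
            intro h'
            exact hchild v _ (Or.inl rfl) _ h' hmem
          rw [hP, if_pos hmem, hD' _ _ hnot0, mul_zero, zero_add,
            Finset.erase_insert hTv, ih _ h1' T hT, hwtins v T hTv]
          field_simp
  have hC' : ∀ x, ∀ S ∈ F x, P x S = wt S / B x :=
    fun x => hC (rnk x + 1) x (Nat.lt_succ_self _)
  constructor
  · intro S hS
    exact hC' _ S hS
  · have : ∑ S ∈ F (Sum.inl Z.root), P (Sum.inl Z.root) S
        = ∑ S ∈ F (Sum.inl Z.root), wt S / B (Sum.inl Z.root) :=
      Finset.sum_congr rfl fun S hS => hC' _ S hS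
    rw [this, ← Finset.sum_div, ← hBF']
    exact div_self (ne_of_gt hBroot)
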